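/- Fix a ∈ (0, 1/2] and define, for r ∈ (0,1), F₃(r) = [2 − 2r² + a(1−a)r²]·(E_a(r) − r'²·K_a(r))/r² − 2a·r'²·K_a(r), where r' = √(1−r²). Then (2/π)·F₃(r) = a·[2 + a(1−a)]·Σ_{n=0}^∞ ((a)_{n+1}(1−a)_{n+1} / ((n+3)!·n!))·r^{2n+4}; in particular F₃(r) > 0 for all r ∈ (0,1). -/

import Mathlib

open Real Set Filter Topology

/-- The digamma function `ψ(x) = Γ'(x)/Γ(x)`. -/
noncomputable def digamma (x : ℝ) : ℝ := deriv Real.Gamma x / Real.Gamma x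

/-- The Ramanujan constant function `R(x) = -2γ - ψ(x) - ψ(1-x)`. -/
noncomputable def ramanujanR (x : ℝ) : ℝ :=
  -2 * Real.eulerMascheroniConstant - digamma x - digamma (1 - x)

/-- The Riemann zeta function as a real series `ζ(s) = Σ_{n=1}^∞ n^{-s}`. -/
noncomputable def zetaR (s : ℝ) : ℝ := ∑' n : ℕ, 1 / ((n : ℝ) + 1) ^ s

/-- The generalized elliptic integral of the first kind
`K_a(r) = (π/2) Σ_{n=0}^∞ ((a)_n (1-a)_n / (n!)^2) r^(2n)`. -/
noncomputable def Ka (a r : ℝ) : ℝ :=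
  Real.pi / 2 * ∑' n : ℕ,
    (Polynomial.eval a (ascPochhammer ℝ n) * Polynomial.eval (1 - a) (ascPochhammer ℝ n)
      / (Nat.factorial n : ℝ) ^ 2) * r ^ (2 * n)

/-- The generalized elliptic integral of the second kind
`E_a(r) = (π/2) Σ_{n=0}^∞ ((a-1)_n (1-a)_n / (n!)^2) r^(2n)`. -/
noncomputable def Ea (a r : ℝ) : ℝ :=
  Real.pi / 2 * ∑' n : ℕ,
    (Polynomial.eval (a - 1) (ascPochhammer ℝ n) * Polynomial.eval (1 - a) (ascPochhammer ℝ n)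
      / (Nat.factorial n : ℝ) ^ 2) * r ^ (2 * n)


/-- coefficient of K series -/
noncomputable def ccoef (a : ℝ) (n : ℕ) : ℝ :=
  Polynomial.eval a (ascPochhammer ℝ n) * Polynomial.eval (1 - a) (ascPochhammer ℝ n)
    / (Nat.factorial n : ℝ) ^ 2

/-- coefficient of E series -/
noncomputable def dcoef (a : ℝ) (n : ℕ) : ℝ :=
  Polynomial.eval (a - 1) (ascPochhammer ℝ n) * Polynomial.eval (1 - a) (ascPochhammer ℝ n)
    / (Nat.factorial n : ℝ) ^ 2

noncomputable def ecoef (a : ℝ) (n : ℕ) : ℝ := ccoef a n / (n + 1)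

noncomputable def hcoef (a : ℝ) (n : ℕ) : ℝ :=
  Polynomial.eval a (ascPochhammer ℝ (n + 1)) * Polynomial.eval (1 - a) (ascPochhammer ℝ (n + 1))
    / ((Nat.factorial (n + 3) : ℝ) * (Nat.factorial n : ℝ))

lemma poch_pos {x : ℝ} (hx : 0 < x) (n : ℕ) : 0 < Polynomial.eval x (ascPochhammer ℝ n) := by
  induction n with
  | zero => simp
  | succ n ih =>
    rw [ascPochhammer_succ_eval]
    have : (0:ℝ) < x + n := by positivity
    positivity

lemma poch_nonneg {x : ℝ} (hx : 0 ≤ x) (n : ℕ) :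
    0 ≤ Polynomial.eval x (ascPochhammer ℝ n) := by
  induction n with
  | zero => simp
  | succ n ih =>
    rw [ascPochhammer_succ_eval]
    have : (0:ℝ) ≤ x + n := by positivity
    positivity

lemma poch_le {x : ℝ} (hx : 0 ≤ x) (hx1 : x ≤ 1) (n : ℕ) :
    Polynomial.eval x (ascPochhammer ℝ n) ≤ (Nat.factorial n : ℝ) := by
  induction n with
  | zero => simp
  | succ n ih =>
    rw [ascPochhammer_succ_eval]
    have h1 : x + n ≤ n + 1 := by linarith
    have h2 : (0:ℝ) ≤ x + n := by positivity
    have h3 : (0:ℝ) ≤ Polynomial.eval x (ascPochhammer ℝ n) := poch_nonneg hx n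
    calc Polynomial.eval x (ascPochhammer ℝ n) * (x + n)
        ≤ (Nat.factorial n : ℝ) * (n + 1) := by
          apply mul_le_mul ih h1 h2 (by positivity)
      _ = (Nat.factorial (n+1) : ℝ) := by
          rw [Nat.factorial_succ]; push_cast; ring

lemma poch_succ_eval_sub_one (a : ℝ) (n : ℕ) :
    Polynomial.eval (a - 1) (ascPochhammer ℝ (n + 1))
      = (a - 1) * Polynomial.eval a (ascPochhammer ℝ n) := by
  rw [ascPochhammer_succ_left]
  simp [Polynomial.eval_comp]

section bounds
variable {a : ℝ} (ha0 : 0 < a) (ha1 : a < 1)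
include ha0 ha1

lemma ccoef_nonneg (n : ℕ) : 0 ≤ ccoef a n := by
  unfold ccoef
  have h1 := poch_nonneg ha0.le n
  have h2 := poch_nonneg (by linarith : (0:ℝ) ≤ 1 - a) n
  positivity

lemma ccoef_le_one (n : ℕ) : ccoef a n ≤ 1 := by
  unfold ccoef
  have h1 := poch_nonneg ha0.le n
  have h2 := poch_nonneg (by linarith : (0:ℝ) ≤ 1 - a) n
  have h3 := poch_le ha0.le ha1.le n
  have h4 := poch_le (by linarith : (0:ℝ) ≤ 1 - a) (by linarith) n
  have hf : (0:ℝ) < (Nat.factorial n : ℝ) := by exact_mod_cast Nat.factorial_pos n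
  rw [div_le_one (by positivity)]
  nlinarith

lemma abs_ccoef_le (n : ℕ) : |ccoef a n| ≤ 1 := by
  rw [abs_le]; exact ⟨by linarith [ccoef_nonneg ha0 ha1 n], ccoef_le_one ha0 ha1 n⟩

lemma abs_dcoef_le (n : ℕ) : |dcoef a n| ≤ 1 := by
  unfold dcoef
  have hf : (0:ℝ) < (Nat.factorial n : ℝ) := by exact_mod_cast Nat.factorial_pos n
  rw [abs_div, abs_mul, div_le_one (by positivity)]
  have h2 := poch_nonneg (by linarith : (0:ℝ) ≤ 1 - a) n
  have h4 := poch_le (by linarith : (0:ℝ) ≤ 1 - a) (by linarith) n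
  have h5 : |Polynomial.eval (a - 1) (ascPochhammer ℝ n)| ≤ (Nat.factorial n : ℝ) := by
    cases n with
    | zero => simp
    | succ m =>
      rw [poch_succ_eval_sub_one, abs_mul]
      have h6 : |a - 1| ≤ 1 := by rw [abs_le]; constructor <;> linarith
      have h7 : |Polynomial.eval a (ascPochhammer ℝ m)| ≤ (Nat.factorial m : ℝ) := by
        rw [abs_of_nonneg (poch_nonneg ha0.le m)]; exact poch_le ha0.le ha1.le m
      have h8 : (Nat.factorial m : ℝ) ≤ (Nat.factorial (m+1) : ℝ) := by
        exact_mod_cast Nat.factorial_le (Nat.le_succ m)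
      calc |a - 1| * |Polynomial.eval a (ascPochhammer ℝ m)|
          ≤ 1 * (Nat.factorial m : ℝ) := by
            apply mul_le_mul h6 h7 (abs_nonneg _) zero_le_one
        _ ≤ (Nat.factorial (m+1) : ℝ) := by linarith
  have h9 : |Polynomial.eval (1-a) (ascPochhammer ℝ n)| ≤ (Nat.factorial n : ℝ) := by
    rw [abs_of_nonneg h2]; exact h4
  have := abs_nonneg (Polynomial.eval (a - 1) (ascPochhammer ℝ n))
  have := abs_nonneg (Polynomial.eval (1 - a) (ascPochhammer ℝ n))
  calc |Polynomial.eval (a-1) (ascPochhammer ℝ n)| * |Polynomial.eval (1-a) (ascPochhammer ℝ n)|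
      ≤ (Nat.factorial n : ℝ) * (Nat.factorial n : ℝ) := by nlinarith
    _ ≤ |(Nat.factorial n : ℝ) ^ 2| := by rw [abs_of_nonneg (by positivity)]; nlinarith
    
lemma abs_ecoef_le (n : ℕ) : |ecoef a n| ≤ 1 := by
  unfold ecoef
  rw [abs_div]
  have h1 : |ccoef a n| ≤ 1 := abs_ccoef_le ha0 ha1 n
  have h2 : (1:ℝ) ≤ |(n:ℝ) + 1| := by
    rw [abs_of_nonneg (by positivity)]; linarith [Nat.cast_nonneg (α := ℝ) n]
  calc |ccoef a n| / |(n:ℝ) + 1| ≤ 1 / 1 := by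
        apply div_le_div₀ (by norm_num) h1 (by norm_num) h2
    _ = 1 := by norm_num

end bounds

lemma summable_bpow {r : ℝ} (hr0 : 0 ≤ r) (hr1 : r < 1) {u : ℕ → ℝ} {C : ℝ}
    (h : ∀ n, |u n| ≤ C) : Summable (fun n => u n * r ^ (2 * n)) := by
  apply Summable.of_norm_bounded (g := fun n => C * (r ^ 2) ^ n)
  · exact (summable_geometric_of_lt_one (by positivity) (by nlinarith)).mul_left C
  · intro n
    rw [Real.norm_eq_abs, abs_mul, pow_mul]
    have h2 : |(r ^ 2) ^ n| = (r ^ 2) ^ n := abs_of_nonneg (by positivity)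
    calc |u n| * |(r^2)^n| ≤ C * (r^2)^n := by
          rw [h2]; exact mul_le_mul_of_nonneg_right (h n) (by positivity)

lemma fact_cast_succ (n : ℕ) : (Nat.factorial (n+1) : ℝ) = ((n:ℝ) + 1) * (Nat.factorial n : ℝ) := by
  rw [Nat.factorial_succ]; push_cast; ring

lemma key1 (a : ℝ) (n : ℕ) :
    dcoef a (n+1) - ccoef a (n+1) + ccoef a n = a * ecoef a n := by
  unfold dcoef ccoef ecoef ccoef
  rw [poch_succ_eval_sub_one, ascPochhammer_succ_eval, ascPochhammer_succ_eval,
    fact_cast_succ]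
  have hf : (Nat.factorial n : ℝ) ≠ 0 := by
    exact_mod_cast Nat.factorial_ne_zero n
  have hn : ((n:ℝ) + 1) ≠ 0 := by positivity
  field_simp
  ring

lemma ccoef_succ (a : ℝ) (n : ℕ) :
    ccoef a (n+1) = ccoef a n * ((a+(n:ℝ))*((1-a)+(n:ℝ))/((n:ℝ)+1)^2) := by
  unfold ccoef
  rw [ascPochhammer_succ_eval, ascPochhammer_succ_eval, fact_cast_succ]
  have hf : (Nat.factorial n : ℝ) ≠ 0 := by exact_mod_cast Nat.factorial_ne_zero n
  have h1 : ((n:ℝ) + 1) ≠ 0 := by positivity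
  field_simp

lemma ecoef_eq (a : ℝ) (n : ℕ) : ecoef a n = ccoef a n / ((n:ℝ)+1) := rfl

lemma hcoef_eq (a : ℝ) (n : ℕ) :
    hcoef a n = ccoef a (n+1) * (((n:ℝ)+1)/((((n:ℝ)+3))*((n:ℝ)+2))) := by
  unfold hcoef ccoef
  have e1 : ((Nat.factorial (n+1) : ℕ) : ℝ) = ((n:ℝ)+1) * (Nat.factorial n : ℝ) :=
    fact_cast_succ n
  have e3 : ((Nat.factorial (n+3) : ℕ) : ℝ)
      = ((n:ℝ)+3)*(((n:ℝ)+2)*(((n:ℝ)+1) * (Nat.factorial n : ℝ))) := by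
    rw [show n+3 = (n+2)+1 from rfl, fact_cast_succ (n+2),
      show n+2 = (n+1)+1 from rfl, fact_cast_succ (n+1), fact_cast_succ n]
    push_cast; ring
  rw [e1, e3]
  have hf : (Nat.factorial n : ℝ) ≠ 0 := by exact_mod_cast Nat.factorial_ne_zero n
  have h1 : ((n:ℝ) + 1) ≠ 0 := by positivity
  have h2 : ((n:ℝ) + 2) ≠ 0 := by positivity
  have h3 : ((n:ℝ) + 3) ≠ 0 := by positivity
  field_simp

lemma key2 (a : ℝ) (n : ℕ) :
    2 * ecoef a (n+2) - 2 * ccoef a (n+2) + 2 * ccoef a (n+1)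
      - (2 - a*(1-a)) * ecoef a (n+1) = (2 + a*(1-a)) * hcoef a n := by
  have h1 : ((n:ℝ) + 1) ≠ 0 := by positivity
  have h2 : ((n:ℝ) + 2) ≠ 0 := by positivity
  have h3 : ((n:ℝ) + 3) ≠ 0 := by positivity
  rw [hcoef_eq, ecoef_eq, ecoef_eq, show n+2 = (n+1)+1 from rfl, ccoef_succ a (n+1)]
  push_cast
  rw [show ((n:ℝ)+1+1) = (n:ℝ)+2 by ring, show ((n:ℝ)+2+1) = (n:ℝ)+3 by ring]
  generalize ccoef a (n+1) = x
  generalize hN : (n:ℝ) = N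
  rw [hN] at h1 h2 h3
  field_simp
  ring

lemma ccoef_zero (a : ℝ) : ccoef a 0 = 1 := by simp [ccoef]
lemma ecoef_zero (a : ℝ) : ecoef a 0 = 1 := by simp [ecoef, ccoef_zero]
lemma ccoef_one (a : ℝ) : ccoef a 1 = a * (1 - a) := by
  simp [ccoef, ascPochhammer_one]
lemma ecoef_one (a : ℝ) : ecoef a 1 = a * (1 - a) / 2 := by
  rw [ecoef, ccoef_one]; norm_num

lemma dcoef_zero (a : ℝ) : dcoef a 0 = 1 := by simp [dcoef]

lemma summable_bpow' {r : ℝ} (hr0 : 0 ≤ r) (hr1 : r < 1) {u : ℕ → ℝ} {C : ℝ}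
    (h : ∀ n, |u n| ≤ C) : Summable (fun n => u n * r ^ (2 * (n + 1))) := by
  have hC : 0 ≤ C := le_trans (abs_nonneg _) (h 0)
  have h2 : ∀ n, |u n * r ^ 2| ≤ C := by
    intro n
    rw [abs_mul, abs_of_nonneg (by positivity : (0:ℝ) ≤ r^2)]
    have : r ^ 2 ≤ 1 := by nlinarith
    nlinarith [abs_nonneg (u n), h n]
  apply (summable_bpow hr0 hr1 h2).congr
  intro n
  rw [show 2 * (n + 1) = 2 * n + 2 from by ring, pow_add]
  ring

/-- combined coefficient sequence -/
noncomputable def gseq (a : ℝ) : ℕ → ℝ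
  | 0 => 0
  | n+1 => (2 * ecoef a (n+1) - 2 * ccoef a (n+1))
      + (2 * ccoef a n - (2 - a*(1-a)) * ecoef a n)

lemma gseq_zero (a : ℝ) : gseq a 0 = 0 := rfl

lemma gseq_succ (a : ℝ) (n : ℕ) : gseq a (n+1)
    = (2 * ecoef a (n+1) - 2 * ccoef a (n+1))
      + (2 * ccoef a n - (2 - a*(1-a)) * ecoef a n) := rfl

lemma gseq_one (a : ℝ) : gseq a 1 = 0 := by
  rw [gseq_succ, ecoef_one, ccoef_one, ecoef_zero, ccoef_zero]; ring

lemma gseq_two (a : ℝ) (n : ℕ) : gseq a (n+2) = (2 + a*(1-a)) * hcoef a n := by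
  have h := key2 a n
  rw [show n+2 = (n+1)+1 from rfl, gseq_succ]
  linarith

section bounds2
variable {a : ℝ} (ha0 : 0 < a) (ha1 : a < 1)
include ha0 ha1

lemma abs_gseq_le (n : ℕ) : |gseq a n| ≤ 8 := by
  cases n with
  | zero => rw [gseq_zero]; norm_num
  | succ m =>
    rw [gseq_succ, abs_le]
    have e1 := abs_le.mp (abs_ecoef_le ha0 ha1 (m+1))
    have e0 := abs_le.mp (abs_ecoef_le ha0 ha1 m)
    have c1 := abs_le.mp (abs_ccoef_le ha0 ha1 (m+1))
    have c0 := abs_le.mp (abs_ccoef_le ha0 ha1 m)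
    have hA : 0 ≤ a*(1-a) := by nlinarith
    have hA1 : a*(1-a) ≤ 1 := by nlinarith
    constructor <;> nlinarith [e0.1, e0.2, e1.1, e1.2, c0.1, c0.2, c1.1, c1.2]

lemma abs_hcoef_le (n : ℕ) : |hcoef a n| ≤ 1 := by
  rw [hcoef_eq, abs_mul]
  have h1 := abs_ccoef_le ha0 ha1 (n+1)
  have h2 : |((n:ℝ)+1)/(((n:ℝ)+3)*((n:ℝ)+2))| ≤ 1 := by
    rw [abs_div, abs_of_nonneg (by positivity : (0:ℝ) ≤ (n:ℝ)+1),
      abs_of_nonneg (by positivity : (0:ℝ) ≤ ((n:ℝ)+3)*((n:ℝ)+2)),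
      div_le_one (by positivity)]
    nlinarith [Nat.cast_nonneg (α := ℝ) n]
  have := abs_nonneg (ccoef a (n+1))
  have := abs_nonneg (((n:ℝ)+1)/(((n:ℝ)+3)*((n:ℝ)+2)))
  nlinarith

lemma hcoef_pos (n : ℕ) : 0 < hcoef a n := by
  unfold hcoef
  have h1 := poch_pos ha0 (n+1)
  have h2 := poch_pos (by linarith : (0:ℝ) < 1 - a) (n+1)
  have h3 : (0:ℝ) < (Nat.factorial (n+3) : ℝ) := by exact_mod_cast Nat.factorial_pos (n+3)
  have h4 : (0:ℝ) < (Nat.factorial n : ℝ) := by exact_mod_cast Nat.factorial_pos n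
  positivity

end bounds2

theorem stmt12 (a : ℝ) (ha : a ∈ Set.Ioc (0 : ℝ) (1/2)) (r : ℝ) (hr : r ∈ Set.Ioo (0 : ℝ) 1) :
    2 / Real.pi * ((2 - 2 * r^2 + a * (1 - a) * r^2) *
        (Ea a r - (Real.sqrt (1 - r^2))^2 * Ka a r) / r^2
        - 2 * a * (Real.sqrt (1 - r^2))^2 * Ka a r) =
      a * (2 + a * (1 - a)) * ∑' n : ℕ,
        (Polynomial.eval a (ascPochhammer ℝ (n + 1)) *
          Polynomial.eval (1 - a) (ascPochhammer ℝ (n + 1)) /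
          ((Nat.factorial (n + 3) : ℝ) * (Nat.factorial n : ℝ))) * r ^ (2 * n + 4) ∧
    0 < (2 - 2 * r^2 + a * (1 - a) * r^2) *
        (Ea a r - (Real.sqrt (1 - r^2))^2 * Ka a r) / r^2
        - 2 * a * (Real.sqrt (1 - r^2))^2 * Ka a r := by
  obtain ⟨ha0, ha2⟩ := ha
  obtain ⟨hr0, hr1⟩ := hr
  have ha1 : a < 1 := lt_of_le_of_lt ha2 (by norm_num)
  have hsq : (Real.sqrt (1 - r^2))^2 = 1 - r^2 := Real.sq_sqrt (by nlinarith)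
  have hrne : r ≠ 0 := ne_of_gt hr0
  have hpi : Real.pi ≠ 0 := Real.pi_ne_zero
  -- summability of basic series
  have hc : Summable (fun n => ccoef a n * r^(2*n)) :=
    summable_bpow hr0.le hr1 (abs_ccoef_le ha0 ha1)
  have hd : Summable (fun n => dcoef a n * r^(2*n)) :=
    summable_bpow hr0.le hr1 (abs_dcoef_le ha0 ha1)
  have he : Summable (fun n => ecoef a n * r^(2*n)) :=
    summable_bpow hr0.le hr1 (abs_ecoef_le ha0 ha1)
  set Tc := ∑' n, ccoef a n * r^(2*n) with hTc
  set Td := ∑' n, dcoef a n * r^(2*n) with hTd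
  set Te := ∑' n, ecoef a n * r^(2*n) with hTe
  have hKa : Ka a r = Real.pi/2 * Tc := rfl
  have hEa : Ea a r = Real.pi/2 * Td := rfl
  have hshift : ∀ n : ℕ, r^(2*(n+1)) = r^(2*n) * r^2 := by
    intro n
    rw [show 2*(n+1) = 2*n+2 from by ring, pow_add]
  -- claim 1 : Td - (1-r²)Tc = r² (a Te)
  have habsdc : ∀ n : ℕ, |dcoef a (n+1) - ccoef a (n+1)| ≤ 2 := by
    intro n
    have h1 := abs_dcoef_le ha0 ha1 (n+1)
    have h2 := abs_ccoef_le ha0 ha1 (n+1)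
    calc |dcoef a (n+1) - ccoef a (n+1)| ≤ |dcoef a (n+1)| + |ccoef a (n+1)| := abs_sub _ _
      _ ≤ 2 := by linarith
  have habsdc0 : ∀ n : ℕ, |dcoef a n - ccoef a n| ≤ 2 := by
    intro n
    have h1 := abs_dcoef_le ha0 ha1 n
    have h2 := abs_ccoef_le ha0 ha1 n
    calc |dcoef a n - ccoef a n| ≤ |dcoef a n| + |ccoef a n| := abs_sub _ _
      _ ≤ 2 := by linarith
  have hq : Summable (fun n => (dcoef a n - ccoef a n) * r^(2*n)) :=
    summable_bpow hr0.le hr1 habsdc0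
  have claim1 : Td - (1 - r^2) * Tc = r^2 * (a * Te) := by
    have e1 : Td - Tc = ∑' n, (dcoef a n - ccoef a n) * r^(2*n) := by
      rw [hTd, hTc, ← Summable.tsum_sub hd hc]
      exact tsum_congr fun n => by ring
    have e2 : ∑' n, (dcoef a n - ccoef a n) * r^(2*n)
        = ∑' n, (dcoef a (n+1) - ccoef a (n+1)) * r^(2*(n+1)) := by
      rw [Summable.tsum_eq_zero_add hq, dcoef_zero, ccoef_zero]
      simp
    have e3 : ∑' n, (dcoef a (n+1) - ccoef a (n+1)) * r^(2*(n+1))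
        = (∑' n, (dcoef a (n+1) - ccoef a (n+1)) * r^(2*n)) * r^2 := by
      rw [← tsum_mul_right]
      exact tsum_congr fun n => by rw [hshift n]; ring
    have e4 : ∑' n, (dcoef a (n+1) - ccoef a (n+1)) * r^(2*n)
        = ∑' n, (a * (ecoef a n * r^(2*n)) - ccoef a n * r^(2*n)) := by
      exact tsum_congr fun n => by linear_combination r^(2*n) * key1 a n
    have e5 : ∑' n, (a * (ecoef a n * r^(2*n)) - ccoef a n * r^(2*n))
        = a * Te - Tc := by
      rw [Summable.tsum_sub (he.mul_left a) hc, tsum_mul_left]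
    have : Td - Tc = (a * Te - Tc) * r^2 := by
      rw [e1, e2, e3, e4, e5]
    linear_combination this
  -- claim 2
  have habsu : ∀ n : ℕ, |2 * ecoef a n - 2 * ccoef a n| ≤ 8 := by
    intro n
    have h1 := abs_ecoef_le ha0 ha1 n
    have h2 := abs_ccoef_le ha0 ha1 n
    calc |2 * ecoef a n - 2 * ccoef a n| ≤ |2 * ecoef a n| + |2 * ccoef a n| := abs_sub _ _
      _ ≤ 8 := by rw [abs_mul, abs_mul]; norm_num; linarith
  have habsv : ∀ n : ℕ, |2 * ccoef a n - (2 - a*(1-a)) * ecoef a n| ≤ 8 := by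
    intro n
    have h1 := abs_ecoef_le ha0 ha1 n
    have h2 := abs_ccoef_le ha0 ha1 n
    have hA : 0 ≤ a*(1-a) := by nlinarith
    have hA1 : a*(1-a) ≤ 1 := by nlinarith
    calc |2 * ccoef a n - (2 - a*(1-a)) * ecoef a n|
        ≤ |2 * ccoef a n| + |(2 - a*(1-a)) * ecoef a n| := abs_sub _ _
      _ ≤ 8 := by
          rw [abs_mul, abs_mul, abs_of_nonneg (by linarith : (0:ℝ) ≤ 2 - a*(1-a))]
          norm_num
          nlinarith [abs_nonneg (ecoef a n), abs_nonneg (ccoef a n)]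
  have hG : Summable (fun n => gseq a n * r^(2*n)) :=
    summable_bpow hr0.le hr1 (abs_gseq_le ha0 ha1)
  have hG1 : Summable (fun n => gseq a (n+1) * r^(2*(n+1))) :=
    summable_bpow' hr0.le hr1 (fun n => abs_gseq_le ha0 ha1 (n+1))
  have hSu : Summable (fun n => (2 * ecoef a (n+1) - 2 * ccoef a (n+1)) * r^(2*(n+1))) :=
    summable_bpow' hr0.le hr1 (fun n => habsu (n+1))
  have hSv : Summable (fun n => (2 * ccoef a n - (2 - a*(1-a)) * ecoef a n) * r^(2*(n+1))) :=
    summable_bpow' hr0.le hr1 habsv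
  have hUfull : Summable (fun n => (2 * ecoef a n - 2 * ccoef a n) * r^(2*n)) :=
    summable_bpow hr0.le hr1 habsu
  have hSig : Summable (fun n => hcoef a n * r^(2*n+4)) := by
    have hb : ∀ n : ℕ, |hcoef a n * r^4| ≤ 1 := by
      intro n
      rw [abs_mul, abs_of_nonneg (by positivity : (0:ℝ) ≤ r^4)]
      have h1 := abs_hcoef_le ha0 ha1 n
      have h2 : r^4 ≤ 1 := by nlinarith
      nlinarith [abs_nonneg (hcoef a n)]
    apply (summable_bpow hr0.le hr1 hb).congr
    intro n
    rw [show 2*n+4 = 2*n+4 from rfl, pow_add]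
    ring
  have claim2 : (2 - 2*r^2 + a*(1-a)*r^2) * Te - 2*(1-r^2) * Tc
      = (2 + a*(1-a)) * ∑' n, hcoef a n * r^(2*n+4) := by
    -- the gseq series equals the shifted combination
    have split : ∑' n, gseq a n * r^(2*n)
        = (∑' n, (2 * ecoef a (n+1) - 2 * ccoef a (n+1)) * r^(2*(n+1)))
          + ∑' n, (2 * ccoef a n - (2 - a*(1-a)) * ecoef a n) * r^(2*(n+1)) := by
      rw [Summable.tsum_eq_zero_add hG, gseq_zero, ← Summable.tsum_add hSu hSv]
      simp only [zero_mul, zero_add]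
      exact tsum_congr fun n => by rw [gseq_succ]; ring
    have muls1 : ∑' n, (2 * ecoef a (n+1) - 2 * ccoef a (n+1)) * r^(2*(n+1))
        = 2 * Te - 2 * Tc := by
      have efull : ∑' n, (2 * ecoef a n - 2 * ccoef a n) * r^(2*n) = 2 * Te - 2 * Tc := by
        rw [hTe, hTc, ← tsum_mul_left, ← tsum_mul_left,
          ← Summable.tsum_sub (he.mul_left 2) (hc.mul_left 2)]
        exact tsum_congr fun n => by ring
      have := Summable.tsum_eq_zero_add hUfull
      rw [efull, ecoef_zero, ccoef_zero] at this
      simp at this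
      linarith
    have muls2 : ∑' n, (2 * ccoef a n - (2 - a*(1-a)) * ecoef a n) * r^(2*(n+1))
        = r^2 * (2 * Tc - (2 - a*(1-a)) * Te) := by
      have vfull : ∑' n, (2 * ccoef a n - (2 - a*(1-a)) * ecoef a n) * r^(2*n)
          = 2 * Tc - (2 - a*(1-a)) * Te := by
        rw [hTe, hTc, ← tsum_mul_left, ← tsum_mul_left,
          ← Summable.tsum_sub (hc.mul_left 2) (he.mul_left (2 - a*(1-a)))]
        exact tsum_congr fun n => by ring
      calc ∑' n, (2 * ccoef a n - (2 - a*(1-a)) * ecoef a n) * r^(2*(n+1))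
          = (∑' n, (2 * ccoef a n - (2 - a*(1-a)) * ecoef a n) * r^(2*n)) * r^2 := by
            rw [← tsum_mul_right]
            exact tsum_congr fun n => by rw [hshift n]; ring
        _ = r^2 * (2 * Tc - (2 - a*(1-a)) * Te) := by rw [vfull]; ring
    have total : ∑' n, gseq a n * r^(2*n)
        = (2 * Te - 2 * Tc) + r^2 * (2 * Tc - (2 - a*(1-a)) * Te) := by
      rw [split, muls1, muls2]
    have step1 : ∑' n, gseq a n * r^(2*n) = ∑' n, gseq a (n+1) * r^(2*(n+1)) := by
      rw [Summable.tsum_eq_zero_add hG, gseq_zero]; simp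
    have hG2 : Summable (fun n => gseq a (n+2) * r^(2*(n+2))) := by
      have : Summable (fun n => (gseq a (n+2) * r^2) * r^(2*(n+1))) :=
        summable_bpow' hr0.le hr1 (u := fun n => gseq a (n+2) * r^2) (C := 8) (by
          intro n
          rw [abs_mul, abs_of_nonneg (by positivity : (0:ℝ) ≤ r^2)]
          have h1 := abs_gseq_le ha0 ha1 (n+2)
          have h2 : r^2 ≤ 1 := by nlinarith
          nlinarith [abs_nonneg (gseq a (n+2))])
      apply this.congr
      intro n
      rw [show 2*(n+2) = 2*(n+1)+2 from by ring, pow_add]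
      ring
    have step2 : ∑' n, gseq a (n+1) * r^(2*(n+1)) = ∑' n, gseq a (n+2) * r^(2*(n+2)) := by
      rw [Summable.tsum_eq_zero_add hG1, gseq_one]; simp
    have step3 : ∑' n, gseq a (n+2) * r^(2*(n+2))
        = (2 + a*(1-a)) * ∑' n, hcoef a n * r^(2*n+4) := by
      rw [← tsum_mul_left]
      exact tsum_congr fun n => by
        rw [gseq_two, show 2*(n+2) = 2*n+4 from by ring]; ring
    have total2 : ∑' n, gseq a n * r^(2*n)
        = (2 + a*(1-a)) * ∑' n, hcoef a n * r^(2*n+4) :=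
      step1.trans (step2.trans step3)
    linear_combination total2 - total
  -- assemble part 1
  have hEK : Ea a r - (1 - r^2) * Ka a r = Real.pi/2 * (r^2 * (a * Te)) := by
    rw [hEa, hKa]
    linear_combination (Real.pi/2) * claim1
  have hmain : 2 / Real.pi * ((2 - 2 * r^2 + a * (1 - a) * r^2) *
        (Ea a r - (Real.sqrt (1 - r^2))^2 * Ka a r) / r^2
        - 2 * a * (Real.sqrt (1 - r^2))^2 * Ka a r)
      = a * (2 + a * (1 - a)) * ∑' n, hcoef a n * r^(2*n+4) := by
    rw [hsq, hEK, hKa]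
    have expand : 2 / Real.pi * ((2 - 2 * r^2 + a * (1 - a) * r^2) *
          (Real.pi/2 * (r^2 * (a * Te))) / r^2
          - 2 * a * (1 - r^2) * (Real.pi/2 * Tc))
        = a * ((2 - 2*r^2 + a*(1-a)*r^2) * Te - 2*(1-r^2) * Tc) := by
      field_simp
    rw [expand, claim2]
    ring
  have hSigpos : 0 < ∑' n, hcoef a n * r^(2*n+4) := by
    have hpos : ∀ n : ℕ, 0 < hcoef a n * r^(2*n+4) := by
      intro n
      have := hcoef_pos ha0 ha1 n
      positivity
    exact Summable.tsum_pos hSig (fun n => (hpos n).le) 0 (hpos 0)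
  constructor
  · exact hmain
  · have hA' : 0 < a*(1-a) := mul_pos ha0 (by linarith)
    have hApos : 0 < 2 + a*(1-a) := by linarith
    have hid : Real.pi/2 * (2/Real.pi) = 1 := by field_simp
    have hF : (2 - 2 * r^2 + a * (1 - a) * r^2) *
          (Ea a r - (Real.sqrt (1 - r^2))^2 * Ka a r) / r^2
          - 2 * a * (Real.sqrt (1 - r^2))^2 * Ka a r
        = Real.pi/2 * (a * (2 + a * (1 - a)) * ∑' n, hcoef a n * r^(2*n+4)) := by
      rw [← hmain, ← mul_assoc, hid, one_mul]
    rw [hF]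
    have h3 : 0 < a * (2 + a * (1 - a)) * (∑' n, hcoef a n * r^(2*n+4)) :=
      mul_pos (mul_pos ha0 hApos) hSigpos
    exact mul_pos (by positivity : (0:ℝ) < Real.pi/2) h3
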